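/- Let E be a finite collection of measurable sets and suppose the associated maximal operator M_E satisfies the restricted weak-type bound μ({M_E(1_B) > η}) ≤ M μ(B) for all measurable B, for some η ∈ (0,1) and M < ∞. Suppose also that sup_{λ>0} λ μ({h_E > λ}) ≤ Λ μ(sh(E)), with 0 < μ(sh(E)) < ∞. Then there exists at least one R ∈ E with μ({x ∈ R : h_E(x) ≤ 2ΛM}) ≥ (1−η) μ(R). -/

import Mathlib

open MeasureTheory Set
open scoped ENNReal

theorem stmt5 {X : Type*} [MeasurableSpace X] (μ : Measure X)
    {ι : Type*} (s : Finset ι) (hs : s.Nonempty) (E : ι → Set X)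
    (hmeas : ∀ i ∈ s, MeasurableSet (E i))
    (hpos : ∀ i ∈ s, 0 < μ (E i)) (hfin : ∀ i ∈ s, μ (E i) < ⊤)
    (hshpos : 0 < μ (⋃ i ∈ s, E i)) (hshfin : μ (⋃ i ∈ s, E i) < ⊤)
    (η M : ℝ≥0∞) (hη0 : 0 < η) (hη1 : η < 1) (hMfin : M < ⊤)
    (hmax : ∀ B : Set X, MeasurableSet B →
      μ {x | η < ⨆ i ∈ s, (E i).indicator (fun _ => μ (B ∩ E i) / μ (E i)) x} ≤ M * μ B)
    (Λ : ℝ≥0∞)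
    (hwt : ∀ lam : ℝ≥0∞, 0 < lam →
      lam * μ {x | lam < ∑ i ∈ s, (E i).indicator (1 : X → ℝ≥0∞) x} ≤
        Λ * μ (⋃ i ∈ s, E i)) :
    ∃ i ∈ s, (1 - η) * μ (E i) ≤
      μ {x ∈ E i | (∑ j ∈ s, (E j).indicator (1 : X → ℝ≥0∞) x) ≤ 2 * Λ * M} := by
  by_contra hcon
  push_neg at hcon
  set h : X → ℝ≥0∞ := fun x => ∑ j ∈ s, (E j).indicator (1 : X → ℝ≥0∞) x with hh
  set c : ℝ≥0∞ := 2 * Λ * M with hc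
  -- trivial case : c = ⊤
  by_cases htop : c = ⊤
  · obtain ⟨i, hi⟩ := hs
    have h1 : {x ∈ E i | h x ≤ c} = E i := by
      rw [htop]; simp
    have h2 := hcon i hi
    rw [h1] at h2
    have h3 : (1 - η) * μ (E i) ≤ μ (E i) := by
      calc (1 - η) * μ (E i) ≤ 1 * μ (E i) := by gcongr; exact tsub_le_self
      _ = μ (E i) := one_mul _
    exact absurd (h3.trans_lt h2) (lt_irrefl _)
  -- main case
  have hmeas_h : Measurable h :=
    Finset.measurable_sum s fun j hj => (measurable_const.indicator (hmeas j hj))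
  set B : Set X := {x | c < h x} with hB
  have hBmeas : MeasurableSet B := measurableSet_lt measurable_const hmeas_h
  -- key estimate on each E i
  have key : ∀ i ∈ s, η * μ (E i) < μ (B ∩ E i) := by
    intro i hi
    have hsub : E i ⊆ {x ∈ E i | h x ≤ c} ∪ (B ∩ E i) := by
      intro x hx
      by_cases hxc : h x ≤ c
      · exact Or.inl ⟨hx, hxc⟩
      · exact Or.inr ⟨not_le.mp hxc, hx⟩
    have hBEfin : μ (B ∩ E i) ≠ ⊤ :=
      ((measure_mono inter_subset_right).trans_lt (hfin i hi)).ne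
    have h1 : μ (E i) ≤ μ {x ∈ E i | h x ≤ c} + μ (B ∩ E i) :=
      (measure_mono hsub).trans (measure_union_le _ _)
    have h2 : μ (E i) < (1 - η) * μ (E i) + μ (B ∩ E i) :=
      h1.trans_lt ((ENNReal.add_lt_add_iff_right hBEfin).mpr (hcon i hi))
    have h3 : η * μ (E i) + (1 - η) * μ (E i) = μ (E i) := by
      rw [← add_mul, add_comm, tsub_add_cancel_of_le hη1.le, one_mul]
    have hne : (1 - η) * μ (E i) ≠ ⊤ :=
      ((le_trans (by gcongr; exact tsub_le_self) (one_mul (μ (E i))).le).trans_lt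
        (hfin i hi)).ne
    have h4 : η * μ (E i) + (1 - η) * μ (E i) < μ (B ∩ E i) + (1 - η) * μ (E i) := by
      rw [h3, add_comm (μ (B ∩ E i))]; exact h2
    exact (ENNReal.add_lt_add_iff_right hne).mp h4
  -- sh(E) is contained in the superlevel set of the maximal function
  have hcover : (⋃ i ∈ s, E i) ⊆
      {x | η < ⨆ i ∈ s, (E i).indicator (fun _ => μ (B ∩ E i) / μ (E i)) x} := by
    intro x hx
    simp only [mem_iUnion, exists_prop] at hx
    obtain ⟨j, hj, hxj⟩ := hx
    have hlt : η < μ (B ∩ E j) / μ (E j) :=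
      (ENNReal.lt_div_iff_mul_lt (Or.inl (hpos j hj).ne') (Or.inl (hfin j hj).ne)).mpr (key j hj)
    have hle : μ (B ∩ E j) / μ (E j) ≤
        ⨆ i ∈ s, (E i).indicator (fun _ => μ (B ∩ E i) / μ (E i)) x := by
      have : (E j).indicator (fun _ => μ (B ∩ E j) / μ (E j)) x = μ (B ∩ E j) / μ (E j) :=
        indicator_of_mem hxj _
      rw [← this]
      exact le_iSup₂ (f := fun i (_ : i ∈ s) =>
        (E i).indicator (fun _ => μ (B ∩ E i) / μ (E i)) x) j hj
    exact hlt.trans_le hle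
  have hshB : μ (⋃ i ∈ s, E i) ≤ M * μ B :=
    (measure_mono hcover).trans (hmax B hBmeas)
  -- weak type estimate at level lam = max c (1/2)
  set lam : ℝ≥0∞ := max c (1 / 2) with hlam
  have hlam0 : 0 < lam := lt_of_lt_of_le (by norm_num) (le_max_right _ _)
  have hmem : ∀ x : X, 0 < h x → ∃ j ∈ s, x ∈ E j := by
    intro x hx
    by_contra hno
    push_neg at hno
    have hz : h x = 0 :=
      Finset.sum_eq_zero fun j hj => indicator_of_notMem (hno j hj) _
    rw [hz] at hx
    exact absurd hx (lt_irrefl _)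
  have hBsub : B ⊆ {x | lam < h x} := by
    intro x hx
    have hxc : c < h x := hx
    obtain ⟨j, hj, hxj⟩ := hmem x ((zero_le : (0:ℝ≥0∞) ≤ c).trans_lt hxc)
    have h1le : (1 : ℝ≥0∞) ≤ h x := by
      simpa [indicator_of_mem hxj] using
        Finset.single_le_sum (f := fun j => (E j).indicator (1 : X → ℝ≥0∞) x)
          (fun i _ => zero_le) hj
    exact max_lt hxc (lt_of_lt_of_le (by norm_num) h1le)
  have hsub2 : {x | lam < h x} ⊆ ⋃ i ∈ s, E i := by
    intro x hx
    obtain ⟨j, hj, hxj⟩ := hmem x (hlam0.trans hx)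
    exact mem_iUnion.mpr ⟨j, mem_iUnion.mpr ⟨hj, hxj⟩⟩
  set t := μ {x | lam < h x} with ht
  by_cases ht0 : t = 0
  · have hB0 : μ B = 0 := le_antisymm (ht0 ▸ measure_mono hBsub) zero_le
    rw [hB0, mul_zero] at hshB
    exact absurd (hshpos.trans_le hshB) (lt_irrefl _)
  · have htfin : t ≠ ⊤ := ((measure_mono hsub2).trans_lt hshfin).ne
    have h4 : lam * t ≤ (Λ * M) * t := by
      calc lam * t ≤ Λ * μ (⋃ i ∈ s, E i) := hwt lam hlam0
        _ ≤ Λ * (M * μ B) := by gcongr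
        _ ≤ Λ * (M * t) := mul_le_mul' le_rfl (mul_le_mul' le_rfl (measure_mono hBsub))
        _ = (Λ * M) * t := by ring
    have h5 : lam ≤ Λ * M := (ENNReal.mul_le_mul_iff_left ht0 htfin).mp h4
    have hLM0 : Λ * M ≠ 0 := by
      intro hz
      rw [hz] at h5
      exact absurd (hlam0.trans_le h5) (lt_irrefl _)
    have hLMtop : Λ * M ≠ ⊤ := by
      intro hz
      apply htop
      rw [hc, mul_assoc, hz, ENNReal.mul_top (by norm_num)]
    have h6 : 2 * (Λ * M) ≤ Λ * M := by
      calc 2 * (Λ * M) = c := by rw [hc, mul_assoc]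
        _ ≤ lam := le_max_left _ _
        _ ≤ Λ * M := h5
    have h7 : Λ * M < 2 * (Λ * M) := by
      conv_lhs => rw [← one_mul (Λ * M)]
      exact ENNReal.mul_lt_mul_left hLM0 hLMtop (by norm_num)
    exact absurd (h7.trans_le h6) (lt_irrefl _)
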